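/- The number of favourite sites either stays the same, increases by exactly one, or drops to one at each step: for every n, either #𝕍(n+1) = #𝕍(n), or #𝕍(n+1) = #𝕍(n) + 1, or #𝕍(n+1) = 1. -/

import Mathlib

/-- Local time: `ξ(n,x) = #{0 ≤ k ≤ n : S(k) = x}`. -/
def localTime (S : ℕ → ℤ) (n : ℕ) (x : ℤ) : ℕ :=
  ((Finset.range (n + 1)).filter (fun k => S k = x)).card

/-- Maximum local time: `ξ*(n) = max_{y ∈ ℤ} ξ(n,y)`. -/
noncomputable def maxLocalTime (S : ℕ → ℤ) (n : ℕ) : ℕ :=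
  ⨆ y : ℤ, localTime S n y

/-- Set of favourite sites: `𝕍(n) = {x ∈ ℤ : ξ(n,x) = max_y ξ(n,y)}`. -/
def favSites (S : ℕ → ℤ) (n : ℕ) : Set ℤ :=
  {x : ℤ | localTime S n x = maxLocalTime S n}

lemma localTime_succ (S : ℕ → ℤ) (n : ℕ) (x : ℤ) :
    localTime S (n+1) x = if S (n+1) = x then localTime S n x + 1 else localTime S n x := by
  unfold localTime
  rw [Finset.range_add_one, Finset.filter_insert]
  split
  · rw [Finset.card_insert_of_notMem (by simp)]
  · rfl

lemma localTime_le (S : ℕ → ℤ) (n : ℕ) (y : ℤ) : localTime S n y ≤ n + 1 := by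
  simpa [localTime] using (Finset.card_filter_le (Finset.range (n+1)) (fun k => S k = y))

lemma localTime_bdd (S : ℕ → ℤ) (n : ℕ) :
    BddAbove (Set.range (fun y => localTime S n y)) :=
  ⟨n+1, by rintro _ ⟨y, rfl⟩; exact localTime_le S n y⟩

lemma le_maxLocalTime (S : ℕ → ℤ) (n : ℕ) (y : ℤ) :
    localTime S n y ≤ maxLocalTime S n :=
  le_ciSup (localTime_bdd S n) y

lemma exists_maxLocalTime (S : ℕ → ℤ) (n : ℕ) :
    ∃ y, localTime S n y = maxLocalTime S n := by
  have h := Nat.sSup_mem (Set.range_nonempty (fun y => localTime S n y)) (localTime_bdd S n)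
  obtain ⟨y, hy⟩ := h
  exact ⟨y, hy⟩

lemma favSites_finite (S : ℕ → ℤ) (n : ℕ) : (favSites S n).Finite := by
  apply Set.Finite.subset (Finset.finite_toSet ((Finset.range (n+1)).image S))
  intro x hx
  have h1 : 1 ≤ localTime S n (S 0) := by
    have h0 : 0 ∈ (Finset.range (n+1)).filter (fun k => S k = S 0) := by simp
    exact Finset.card_pos.mpr ⟨0, h0⟩
  have hx' : 1 ≤ localTime S n x := by
    have := h1.trans (le_maxLocalTime S n (S 0))
    have hxm : localTime S n x = maxLocalTime S n := hx
    omega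
  obtain ⟨k, hk⟩ := Finset.card_pos.mp hx'
  simp only [Finset.mem_filter, Finset.mem_range] at hk
  simp only [Finset.coe_image, Set.mem_image, Finset.mem_coe, Finset.mem_range]
  exact ⟨k, hk.1, hk.2⟩

theorem card_favSites_step (S : ℕ → ℤ) (hS0 : S 0 = 0)
    (hstep : ∀ n, |S (n + 1) - S n| = 1) (n : ℕ) :
    (favSites S (n + 1)).ncard = (favSites S n).ncard ∨
    (favSites S (n + 1)).ncard = (favSites S n).ncard + 1 ∨
    (favSites S (n + 1)).ncard = 1 := by
  set a := S (n+1) with ha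
  set M := maxLocalTime S n with hM
  by_cases hc : localTime S n a = M
  · -- max increases, favSites (n+1) = {a}
    right; right
    have hmax : maxLocalTime S (n+1) = M + 1 := by
      apply le_antisymm
      · apply ciSup_le
        intro y
        rw [localTime_succ]
        split
        · next h => rw [← h, ← ha]; omega
        · exact Nat.le_succ_of_le (le_maxLocalTime S n y)
      · have h2 : localTime S (n+1) a = M + 1 := by
          rw [localTime_succ, if_pos rfl, hc]
        rw [← h2]; exact le_maxLocalTime S (n+1) a
    have hfav : favSites S (n+1) = {a} := by
      ext x
      simp only [favSites, Set.mem_setOf_eq, Set.mem_singleton_iff, hmax]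
      rw [localTime_succ]
      split
      · next h => subst h; rw [hc]; simp [ha]
      · next h =>
        constructor
        · intro hx
          have := le_maxLocalTime S n x
          omega
        · intro hx; exact absurd hx.symm h
    rw [hfav, Set.ncard_singleton]
  · -- max stays the same
    have hlt : localTime S n a < M := lt_of_le_of_ne (le_maxLocalTime S n a) hc
    have hmax : maxLocalTime S (n+1) = M := by
      apply le_antisymm
      · apply ciSup_le
        intro y
        rw [localTime_succ]
        split
        · next h => rw [← h, ← ha]; omega
        · exact le_maxLocalTime S n y
      · obtain ⟨y, hy⟩ := exists_maxLocalTime S n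
        have hya : a ≠ y := by intro h; rw [h] at hc; exact hc hy
        have : localTime S (n+1) y = M := by
          rw [localTime_succ, if_neg hya, hy]
        rw [← this]; exact le_maxLocalTime S (n+1) y
    by_cases hb : localTime S n a + 1 = M
    · -- a becomes a new favourite site
      right; left
      have hnotmem : a ∉ favSites S n := by
        intro h
        have : localTime S n a = M := h
        omega
      have hfav : favSites S (n+1) = insert a (favSites S n) := by
        ext x
        simp only [favSites, Set.mem_setOf_eq, Set.mem_insert_iff, hmax]
        rw [localTime_succ]
        split
        · next h => subst h; simp [← ha, hb]
        · next h =>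
          constructor
          · intro hx; exact Or.inr hx
          · rintro (rfl | hx)
            · exact absurd rfl h
            · exact hx
      rw [hfav, Set.ncard_insert_of_notMem hnotmem (favSites_finite S n)]
    · -- favourite sites unchanged
      left
      have hfav : favSites S (n+1) = favSites S n := by
        ext x
        simp only [favSites, Set.mem_setOf_eq, hmax]
        rw [localTime_succ]
        split
        · next h => subst h; rw [← ha]; constructor <;> intro hx <;> omega
        · exact Iff.rfl
      rw [hfav]
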